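/- For β = 1 and any integer α ≥ 1, the generating function H_{E✳}(x) counting paths in L_{1/α}(k) that start with an E-step, have no horizontal crosses, and have no right bounces satisfies H_{E✳}(x)·(1 + g_ee(x) + g_en(x)) = g_ee(x) + g_en(x) and H_{E✳}(x) = α·(c_α(x) − 1). Moreover, the generating function counting paths in L_{1/α}(k) that start with an N-step and have no horizontal crosses equals c_α(x) − 1; that is, for each k ≥ 1 the number of such paths is the Fuss–Catalan number (1/(αk+1))·C((α+1)k, k). -/

import Mathlib

/-!
Lattice paths with unit East (`true`) and unit North (`false`) steps,
bounces with respect to the line `y = (β/α)·x`, and the associated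
generating functions over `ℚ`.
-/

/-- A lattice path is a list of unit steps: `true` = East, `false` = North. -/
abbrev LatticePath := List Bool

/-- `p` is a lattice path from `(0,0)` to `(α*k, β*k)`, i.e. a member of `L_{β/α}(k)`. -/
def InL (α β k : ℕ) (p : LatticePath) : Prop :=
  p.count true = α * k ∧ p.count false = β * k

/-- `p` has a left bounce at step index `i`: step `i` is an E-step, step `i+1` is an
N-step, and their common endpoint (the point reached after `i+1` steps) lies on the
line `y = (β/α)·x`, i.e. `α·y = β·x`. -/
def IsLeftBounce (α β : ℕ) (p : LatticePath) (i : ℕ) : Prop :=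
  p[i]? = some true ∧ p[i + 1]? = some false ∧
    α * ((p.take (i + 1)).count false) = β * ((p.take (i + 1)).count true)

/-- `p` has a right bounce at step index `i`: step `i` is an N-step, step `i+1` is an
E-step, and their common endpoint lies on the line `y = (β/α)·x`. -/
def IsRightBounce (α β : ℕ) (p : LatticePath) (i : ℕ) : Prop :=
  p[i]? = some false ∧ p[i + 1]? = some true ∧
    α * ((p.take (i + 1)).count false) = β * ((p.take (i + 1)).count true)

/-- The number of left bounces of `p` with respect to the line `y = (β/α)·x`. -/
noncomputable def leftBounces (α β : ℕ) (p : LatticePath) : ℕ :=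
  {i | IsLeftBounce α β p i}.ncard

/-- The number of right bounces of `p` with respect to the line `y = (β/α)·x`. -/
noncomputable def rightBounces (α β : ℕ) (p : LatticePath) : ℕ :=
  {i | IsRightBounce α β p i}.ncard

/-- `p` is bounce-free: it has no left and no right bounces. -/
def BounceFree (α β : ℕ) (p : LatticePath) : Prop :=
  (∀ i, ¬ IsLeftBounce α β p i) ∧ (∀ i, ¬ IsRightBounce α β p i)

/-- The first step of `p` is `a`. -/
def FirstStep (p : LatticePath) (a : Bool) : Prop := p.head? = some a

/-- The last step of `p` is `b`. -/
def LastStep (p : LatticePath) (b : Bool) : Prop := p.getLast? = some b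

/-- The generating function `Σ_{k≥1} |S k|·xᵏ ∈ ℚ[[x]]` of a family of path sets. -/
noncomputable def gfOf (S : ℕ → Set LatticePath) : PowerSeries ℚ :=
  PowerSeries.mk fun k => if k = 0 then 0 else ((S k).ncard : ℚ)

/-- `g(x) = Σ_{k≥1} C((α+β)k, αk)·xᵏ`, counting all paths in `L_{β/α}(k)`. -/
noncomputable def gSer (α β : ℕ) : PowerSeries ℚ :=
  PowerSeries.mk fun k => if k = 0 then 0 else ((((α + β) * k).choose (α * k) : ℕ) : ℚ)

/-- `g_ee(x) = Σ_{k≥1} C((α+β)k−2, αk−2)·xᵏ`, counting EE-paths in `L_{β/α}(k)`.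
We write the lower index as `βk = ((α+β)k−2) − (αk−2)`, which equals
`C((α+β)k−2, αk−2)` by the symmetry of binomial coefficients and correctly
implements the convention `C(n, −1) = 0` (needed when `αk = 1`), which ℕ-truncated
subtraction would not. -/
noncomputable def geeSer (α β : ℕ) : PowerSeries ℚ :=
  PowerSeries.mk fun k => if k = 0 then 0 else ((((α + β) * k - 2).choose (β * k) : ℕ) : ℚ)

/-- `g_en(x) = Σ_{k≥1} C((α+β)k−2, αk−1)·xᵏ`, counting EN-paths in `L_{β/α}(k)`. -/
noncomputable def genSer (α β : ℕ) : PowerSeries ℚ :=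
  PowerSeries.mk fun k => if k = 0 then 0 else ((((α + β) * k - 2).choose (α * k - 1) : ℕ) : ℚ)

/-- `g_nn(x) = Σ_{k≥1} C((α+β)k−2, αk)·xᵏ`, counting NN-paths in `L_{β/α}(k)`. -/
noncomputable def gnnSer (α β : ℕ) : PowerSeries ℚ :=
  PowerSeries.mk fun k => if k = 0 then 0 else ((((α + β) * k - 2).choose (α * k) : ℕ) : ℚ)

/-- `f_ee(x)`: generating function of bounce-free EE-paths in `L_{β/α}(k)`. -/
noncomputable def feeSer (α β : ℕ) : PowerSeries ℚ :=
  gfOf fun k => {p | InL α β k p ∧ BounceFree α β p ∧ FirstStep p true ∧ LastStep p true}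

/-- `f_en(x)`: generating function of bounce-free EN-paths in `L_{β/α}(k)`. -/
noncomputable def fenSer (α β : ℕ) : PowerSeries ℚ :=
  gfOf fun k => {p | InL α β k p ∧ BounceFree α β p ∧ FirstStep p true ∧ LastStep p false}

/-- `f_nn(x)`: generating function of bounce-free NN-paths in `L_{β/α}(k)`. -/
noncomputable def fnnSer (α β : ℕ) : PowerSeries ℚ :=
  gfOf fun k => {p | InL α β k p ∧ BounceFree α β p ∧ FirstStep p false ∧ LastStep p false}

/-- `f(x)`: generating function of all bounce-free paths in `L_{β/α}(k)`. -/
noncomputable def fSer (α β : ℕ) : PowerSeries ℚ :=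
  gfOf fun k => {p | InL α β k p ∧ BounceFree α β p}

/-- `B_{ℓ,r}(x)`: generating function of paths in `L_{β/α}(k)` with exactly `ℓ`
left bounces and exactly `r` right bounces. -/
noncomputable def BSer (α β ℓ r : ℕ) : PowerSeries ℚ :=
  gfOf fun k => {p | InL α β k p ∧ leftBounces α β p = ℓ ∧ rightBounces α β p = r}

/-- The Fuss–Catalan generating function `c_α(x) = Σ_{k≥0} 1/(αk+1)·C((α+1)k, k)·xᵏ`. -/
noncomputable def fussCatalan (α : ℕ) : PowerSeries ℚ :=
  PowerSeries.mk fun k => (1 / ((α * k + 1 : ℕ) : ℚ)) * ((((α + 1) * k).choose k : ℕ) : ℚ)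

/-- For slope `1/α`: `p` has a horizontal cross at the lattice point `(α*i, i)` (`i ≥ 1`):
`p` passes through `(α*i, i)` (so the prefix of length `(α+1)*i` has exactly `α*i`
E-steps), and both the step ending there and the step starting there are E-steps. -/
def HasHCrossAt (α : ℕ) (p : LatticePath) (i : ℕ) : Prop :=
  1 ≤ i ∧ (p.take ((α + 1) * i)).count true = α * i ∧
    p[(α + 1) * i - 1]? = some true ∧ p[(α + 1) * i]? = some true

/-- `p` has no horizontal crosses with respect to the line `y = x/α`. -/
def NoHCross (α : ℕ) (p : LatticePath) : Prop := ∀ i, ¬ HasHCrossAt α p i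

/-- Generating function of paths in `L_{1/α}(k)` that start with an E-step, have no
horizontal crosses and no right bounces. -/
noncomputable def HEstar (α : ℕ) : PowerSeries ℚ :=
  gfOf fun k => {p | InL α 1 k p ∧ FirstStep p true ∧ NoHCross α p ∧
    ∀ i, ¬ IsRightBounce α 1 p i}

/-- Generating function of paths in `L_{1/α}(k)` that start with an N-step and have
no horizontal crosses. -/
noncomputable def NstartNHC (α : ℕ) : PowerSeries ℚ :=
  gfOf fun k => {p | InL α 1 k p ∧ FirstStep p false ∧ NoHCross α p}

namespace S19

/-- prefix count of E-steps -/
def ct (p : List Bool) (t : ℕ) : ℕ := (p.take t).count true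
/-- prefix count of N-steps -/
def cf (p : List Bool) (t : ℕ) : ℕ := (p.take t).count false

lemma count_tf (l : List Bool) : l.count true + l.count false = l.length := by
  induction l with
  | nil => rfl
  | cons a l ih => cases a <;> simp [List.count_cons] <;> omega

lemma ct_add_cf (p : List Bool) (t : ℕ) (h : t ≤ p.length) : ct p t + cf p t = t := by
  have := count_tf (p.take t)
  rwa [List.length_take, min_eq_left h] at this

lemma ct_length (p : List Bool) : ct p p.length = p.count true := by
  simp [ct]

lemma cf_length (p : List Bool) : cf p p.length = p.count false := by
  simp [cf]

lemma ct_of_le (p : List Bool) {t : ℕ} (h : p.length ≤ t) : ct p t = p.count true := by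
  simp [ct, List.take_of_length_le h]

lemma cf_of_le (p : List Bool) {t : ℕ} (h : p.length ≤ t) : cf p t = p.count false := by
  simp [cf, List.take_of_length_le h]

lemma ct_succ_true (p : List Bool) {t : ℕ} (h : p[t]? = some true) :
    ct p (t+1) = ct p t + 1 := by
  simp [ct, List.take_succ, h, List.count_append]

lemma cf_succ_true (p : List Bool) {t : ℕ} (h : p[t]? = some true) :
    cf p (t+1) = cf p t := by
  simp [cf, List.take_succ, h, List.count_append]

lemma ct_succ_false (p : List Bool) {t : ℕ} (h : p[t]? = some false) :
    ct p (t+1) = ct p t := by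
  simp [ct, List.take_succ, h, List.count_append]

lemma cf_succ_false (p : List Bool) {t : ℕ} (h : p[t]? = some false) :
    cf p (t+1) = cf p t + 1 := by
  simp [cf, List.take_succ, h, List.count_append]

lemma ct_succ_none (p : List Bool) {t : ℕ} (h : p[t]? = none) :
    ct p (t+1) = ct p t := by
  simp [ct, List.take_succ, h, List.count_append]

lemma cf_succ_none (p : List Bool) {t : ℕ} (h : p[t]? = none) :
    cf p (t+1) = cf p t := by
  simp [cf, List.take_succ, h, List.count_append]

lemma take_mono_sublist (p : List Bool) {s t : ℕ} (h : s ≤ t) : List.Sublist (p.take s) (p.take t) := by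
  rw [← min_eq_left h, ← List.take_take]
  exact List.take_sublist _ _

lemma ct_mono (p : List Bool) {s t : ℕ} (h : s ≤ t) : ct p s ≤ ct p t :=
  (take_mono_sublist p h).count_le _

lemma cf_mono (p : List Bool) {s t : ℕ} (h : s ≤ t) : cf p s ≤ cf p t :=
  (take_mono_sublist p h).count_le _

lemma ct_take (p : List Bool) {s t : ℕ} (h : s ≤ t) : ct (p.take t) s = ct p s := by
  simp [ct, List.take_take, min_eq_left h]

lemma cf_take (p : List Bool) {s t : ℕ} (h : s ≤ t) : cf (p.take t) s = cf p s := by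
  simp [cf, List.take_take, min_eq_left h]

lemma ct_append_le (q r : List Bool) {s : ℕ} (h : s ≤ q.length) :
    ct (q ++ r) s = ct q s := by
  simp [ct, List.take_append, Nat.sub_eq_zero_of_le h]

lemma cf_append_le (q r : List Bool) {s : ℕ} (h : s ≤ q.length) :
    cf (q ++ r) s = cf q s := by
  simp [cf, List.take_append, Nat.sub_eq_zero_of_le h]

/-- finiteness of length-n lists -/
lemma finite_length (n : ℕ) : {l : List Bool | l.length = n}.Finite := by
  induction n with
  | zero =>
      have : {l : List Bool | l.length = 0} = {([] : List Bool)} := by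
        ext l; simp [List.length_eq_zero_iff]
      rw [this]; exact Set.finite_singleton _
  | succ n ih =>
      have hsub : {l : List Bool | l.length = n + 1} ⊆
          (fun x : Bool × List Bool => x.1 :: x.2) '' (Set.univ ×ˢ {l | l.length = n}) := by
        intro l hl
        match l, hl with
        | a :: l', hl => exact ⟨(a, l'), ⟨trivial, by simpa using hl⟩, rfl⟩
      exact ((Set.finite_univ.prod ih).image _).subset hsub

lemma finite_counts (a b : ℕ) :
    {l : List Bool | l.count true = a ∧ l.count false = b}.Finite := by
  refine (finite_length (a + b)).subset ?_
  rintro l ⟨h1, h2⟩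
  have := count_tf l
  simp only [Set.mem_setOf_eq]; omega

/-- The number of bool lists with `a` trues and `b` falses is `(a+b).choose b`. -/
lemma ncard_counts : ∀ (n a b : ℕ), a + b = n →
    {l : List Bool | l.count true = a ∧ l.count false = b}.ncard = n.choose b := by
  intro n
  induction n with
  | zero =>
      intro a b h
      obtain ⟨rfl, rfl⟩ : a = 0 ∧ b = 0 := by omega
      have : {l : List Bool | l.count true = 0 ∧ l.count false = 0} = {([] : List Bool)} := by
        ext l
        constructor
        · rintro ⟨h1, h2⟩
          have := count_tf l
          have : l.length = 0 := by omega
          simpa [List.length_eq_zero_iff] using this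
        · rintro rfl; simp
      rw [this]; simp
  | succ n ih =>
      intro a b h
      have hconsinj : ∀ c : Bool, Function.Injective (fun l : List Bool => c :: l) := by
        intro c l1 l2 h; simpa using h
      have hsplit : {l : List Bool | l.count true = a ∧ l.count false = b} =
          (fun l : List Bool => true :: l) '' {l | l.count true + 1 = a ∧ l.count false = b} ∪
          (fun l : List Bool => false :: l) '' {l | l.count true = a ∧ l.count false + 1 = b} := by
        ext l
        constructor
        · rintro ⟨h1, h2⟩
          have hlen : l.length = n + 1 := by have := count_tf l; omega
          match l, hlen with
          | c :: l', _ =>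
            cases c
            · right
              refine ⟨l', ⟨?_, ?_⟩, rfl⟩ <;> simp [List.count_cons] at h1 h2 ⊢ <;> omega
            · left
              refine ⟨l', ⟨?_, ?_⟩, rfl⟩ <;> simp [List.count_cons] at h1 h2 ⊢ <;> omega
        · rintro (⟨l', ⟨h1, h2⟩, rfl⟩ | ⟨l', ⟨h1, h2⟩, rfl⟩) <;>
            constructor <;> simp [List.count_cons] <;> omega
      rw [hsplit]
      have hdisj : Disjoint
          ((fun l : List Bool => true :: l) '' {l | l.count true + 1 = a ∧ l.count false = b})
          ((fun l : List Bool => false :: l) '' {l | l.count true = a ∧ l.count false + 1 = b}) := by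
        rw [Set.disjoint_left]
        rintro x ⟨l1, _, rfl⟩ ⟨l2, _, h⟩
        simp at h
      rcases Nat.eq_zero_or_pos a with rfl | ha
      · have h1 : {l : List Bool | l.count true + 1 = 0 ∧ l.count false = b} = ∅ := by
          ext l; simp
        obtain ⟨b', rfl⟩ : ∃ b', b = b' + 1 := ⟨n, by omega⟩
        have h2 : {l : List Bool | l.count true = 0 ∧ l.count false + 1 = b' + 1} =
            {l : List Bool | l.count true = 0 ∧ l.count false = b'} := by
          ext l; simp
        rw [h1, h2, Set.image_empty, Set.empty_union,
          Set.ncard_image_of_injective _ (hconsinj false), ih 0 b' (by omega)]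
        have : b' = n := by omega
        subst this
        simp [Nat.choose_self, Nat.choose_succ_self_right]
      · rcases Nat.eq_zero_or_pos b with rfl | hb
        · have h2 : {l : List Bool | l.count true = a ∧ l.count false + 1 = 0} = ∅ := by
            ext l; simp
          obtain ⟨a', rfl⟩ : ∃ a', a = a' + 1 := ⟨a - 1, by omega⟩
          have h1 : {l : List Bool | l.count true + 1 = a' + 1 ∧ l.count false = 0} =
              {l : List Bool | l.count true = a' ∧ l.count false = 0} := by
            ext l; simp
          rw [h2, h1, Set.image_empty, Set.union_empty,
            Set.ncard_image_of_injective _ (hconsinj true), ih a' 0 (by omega)]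
          simp
        · obtain ⟨a', rfl⟩ : ∃ a', a = a' + 1 := ⟨a - 1, by omega⟩
          obtain ⟨b', rfl⟩ : ∃ b', b = b' + 1 := ⟨b - 1, by omega⟩
          have h1 : {l : List Bool | l.count true + 1 = a' + 1 ∧ l.count false = b' + 1} =
              {l : List Bool | l.count true = a' ∧ l.count false = b' + 1} := by
            ext l; simp
          have h2 : {l : List Bool | l.count true = a' + 1 ∧ l.count false + 1 = b' + 1} =
              {l : List Bool | l.count true = a' + 1 ∧ l.count false = b'} := by
            ext l; simp
          rw [Set.ncard_union_eq hdisj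
              (((finite_counts _ _).subset (by rw [h1])).image _)
              (((finite_counts _ _).subset (by rw [h2])).image _),
            h1, h2, Set.ncard_image_of_injective _ (hconsinj true),
            Set.ncard_image_of_injective _ (hconsinj false),
            ih a' (b'+1) (by omega), ih (a'+1) b' (by omega),
            Nat.choose_succ_succ' n b']
          omega


/-! ### Line predicates and set definitions -/

def OnL (α : ℕ) (p : List Bool) (t : ℕ) : Prop := α * cf p t = ct p t
def Above (α : ℕ) (p : List Bool) : Prop := ∀ t, ct p t ≤ α * cf p t
def NoED1 (α : ℕ) (p : List Bool) : Prop :=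
  ∀ t, 1 ≤ t → OnL α p t → p[t]? ≠ some true
def SplitPt (α : ℕ) (p : List Bool) (t : ℕ) : Prop :=
  OnL α p t ∧ (t = p.length ∨ p[t]? = some true)

def Lset (α k : ℕ) : Set LatticePath := {p | InL α 1 k p}
def Eset (α k : ℕ) : Set LatticePath := {p | InL α 1 k p ∧ FirstStep p true}
def E'set (α j : ℕ) : Set LatticePath := if j = 0 then {([] : List Bool)} else Eset α j
def Aset (α k : ℕ) : Set LatticePath := {p | InL α 1 k p ∧ Above α p}
def Hset (α k : ℕ) : Set LatticePath := {p | InL α 1 k p ∧ FirstStep p true ∧ NoED1 α p}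

lemma InL_length {α k : ℕ} {p : List Bool} (h : InL α 1 k p) :
    p.length = (α + 1) * k := by
  have h0 := count_tf p
  have h1 := h.1; have h2 := h.2
  have : (α + 1) * k = α * k + 1 * k := by ring
  omega

lemma onL_zero (α : ℕ) (p : List Bool) : OnL α p 0 := by simp [OnL, ct, cf]

lemma onL_length {α k : ℕ} {p : List Bool} (h : InL α 1 k p) : OnL α p p.length := by
  simp [OnL, ct_length, cf_length, h.1, h.2]

lemma getElem?_lt_length {p : List Bool} {t : ℕ} {b : Bool} (h : p[t]? = some b) :
    t < p.length := by
  by_contra hc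
  rw [List.getElem?_eq_none (by omega)] at h
  exact absurd h (by simp)

lemma onL_time {α : ℕ} {p : List Bool} {t : ℕ} (h : OnL α p t) (ht : t ≤ p.length) :
    t = (α + 1) * cf p t := by
  have h1 := ct_add_cf p t ht
  have h2 : α * cf p t = ct p t := h
  have : (α + 1) * cf p t = α * cf p t + cf p t := by ring
  omega

/-- Claim A: no h-cross and no right bounce iff no east departure at positive time. -/
lemma noHCross_noBounce_iff (α : ℕ) (p : List Bool) :
    (NoHCross α p ∧ ∀ i, ¬ IsRightBounce α 1 p i) ↔ NoED1 α p := by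
  constructor
  · rintro ⟨hnc, hnb⟩ t ht honl htrue
    have htlen : t < p.length := getElem?_lt_length htrue
    obtain ⟨b, hb⟩ : ∃ b, p[t-1]? = some b :=
      ⟨p[t-1]'(by omega), List.getElem?_eq_getElem (by omega)⟩
    cases b
    · -- previous step N : right bounce at t - 1
      refine hnb (t - 1) ⟨hb, ?_, ?_⟩
      · rw [show t - 1 + 1 = t by omega]; exact htrue
      · rw [show t - 1 + 1 = t by omega, one_mul]; exact honl
    · -- previous step E : horizontal cross at i = cf p t
      have hteq : t = (α + 1) * cf p t := onL_time honl (le_of_lt htlen)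
      have hi1 : 1 ≤ cf p t := by
        rcases Nat.eq_zero_or_pos (cf p t) with h0 | h0
        · rw [h0, mul_zero] at hteq; omega
        · exact h0
      refine hnc (cf p t) ⟨hi1, ?_, ?_, ?_⟩
      · rw [← hteq]; exact honl.symm
      · rw [← hteq]; exact hb
      · rw [← hteq]; exact htrue
  · rintro hned
    constructor
    · rintro i ⟨hi1, hcount, hprev, hcur⟩
      have htlen : (α + 1) * i < p.length := getElem?_lt_length hcur
      have hct : ct p ((α + 1) * i) = α * i := hcount
      have hsum := ct_add_cf p ((α + 1) * i) (le_of_lt htlen)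
      have harith : (α + 1) * i = α * i + i := by ring
      have hcf : cf p ((α + 1) * i) = i := by omega
      refine hned ((α + 1) * i) (by omega) ?_ hcur
      show α * cf p ((α + 1) * i) = ct p ((α + 1) * i)
      rw [hcf, hct]
    · rintro i ⟨h1, h2, h3⟩
      refine hned (i + 1) (by omega) ?_ h2
      show α * cf p (i + 1) = ct p (i + 1)
      have := h3
      rw [one_mul] at this
      exact this

/-- staying above under a no-east-departure-style hypothesis -/
lemma above_of' (α : ℕ) (hα : 1 ≤ α) (p : List Bool)
    (h0 : p[0]? ≠ some true)
    (h : ∀ s, 1 ≤ s → s < p.length → OnL α p s → p[s]? = some true →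
      p[s-1]? = some true → False) :
    Above α p := by
  intro t
  induction t using Nat.strong_induction_on with
  | _ t ih =>
    match t with
    | 0 => simp [ct, cf]
    | (t + 1) =>
      have iht : ct p t ≤ α * cf p t := ih t (by omega)
      rcases Nat.lt_or_ge t p.length with hlt | hge
      · have hsome : p[t]? = some (p[t]'(hlt)) := List.getElem?_eq_getElem hlt
        rcases hval : p[t]'(hlt) with _ | _
        · rw [hval] at hsome
          rw [ct_succ_false p hsome, cf_succ_false p hsome]
          have : α * (cf p t + 1) = α * cf p t + α := by ring
          omega
        · rw [hval] at hsome
          rw [ct_succ_true p hsome, cf_succ_true p hsome]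
          rcases Nat.lt_or_ge (ct p t) (α * cf p t) with hstrict | hge2
          · omega
          · have honl : OnL α p t := by
              show α * cf p t = ct p t; omega
            rcases Nat.eq_zero_or_pos t with rfl | ht1
            · exact absurd hsome h0
            · obtain ⟨b, hb⟩ : ∃ b, p[t-1]? = some b :=
                ⟨p[t-1]'(by omega), List.getElem?_eq_getElem (by omega)⟩
              cases b
              · exfalso
                have e1 := cf_succ_false p hb
                have e2 := ct_succ_false p hb
                rw [show t - 1 + 1 = t by omega] at e1 e2
                have iht' : ct p (t-1) ≤ α * cf p (t-1) := ih (t-1) (by omega)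
                have : α * cf p t = α * (cf p (t-1) + 1) := by rw [e1]
                have : α * (cf p (t-1) + 1) = α * cf p (t-1) + α := by ring
                omega
              · exact absurd (h t ht1 hlt honl hsome hb) (fun x => x)
      · rw [ct_succ_none p (List.getElem?_eq_none hge), cf_succ_none p (List.getElem?_eq_none hge)]
        exact iht

/-- above paths make no east departures at all -/
lemma noED_of_above {α : ℕ} {p : List Bool} (h : Above α p) :
    ∀ s, OnL α p s → p[s]? ≠ some true := by
  intro s honl htrue
  have h1 := ct_succ_true p htrue
  have h2 := cf_succ_true p htrue
  have h3 := h (s + 1)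
  rw [h1, h2] at h3
  have h4 : α * cf p s = ct p s := honl
  omega
/-! ### Set identifications -/

lemma hset_eq (α k : ℕ) :
    {p | InL α 1 k p ∧ FirstStep p true ∧ NoHCross α p ∧ ∀ i, ¬ IsRightBounce α 1 p i}
      = Hset α k := by
  ext p
  have := noHCross_noBounce_iff α p
  simp only [Set.mem_setOf_eq, Hset]
  tauto

lemma head?_eq_getElem? (p : List Bool) : p.head? = p[0]? := by
  cases p <;> simp

lemma nset_eq (α k : ℕ) (hα : 1 ≤ α) (hk : 1 ≤ k) :
    {p | InL α 1 k p ∧ FirstStep p false ∧ NoHCross α p} = Aset α k := by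
  ext p
  simp only [Set.mem_setOf_eq, Aset]
  constructor
  · rintro ⟨hin, hfs, hnc⟩
    refine ⟨hin, above_of' α hα p ?_ ?_⟩
    · rw [← head?_eq_getElem?, hfs]; simp
    · intro s hs1 hslen honl htrue hprev
      have hteq : s = (α + 1) * cf p s := onL_time honl (le_of_lt hslen)
      have hi1 : 1 ≤ cf p s := by
        rcases Nat.eq_zero_or_pos (cf p s) with h0 | h0
        · rw [h0, mul_zero] at hteq; omega
        · exact h0
      exact hnc (cf p s) ⟨hi1, by rw [← hteq]; exact honl.symm,
        by rw [← hteq]; exact hprev, by rw [← hteq]; exact htrue⟩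
  · rintro ⟨hin, hab⟩
    have hlen : p.length = (α + 1) * k := InL_length hin
    have hlen1 : 1  ≤ p.length := by
      rw [hlen]; have : (α+1) * k ≥ 1 * 1 := Nat.mul_le_mul (by omega) hk; omega
    refine ⟨hin, ?_, ?_⟩
    · obtain ⟨b, hb⟩ : ∃ b, p[0]? = some b :=
        ⟨p[0]'(by omega), List.getElem?_eq_getElem (by omega)⟩
      cases b
      · rw [FirstStep, head?_eq_getElem?, hb]
      · exact absurd hb (noED_of_above hab 0 (onL_zero α p))
    · rintro i ⟨hi1, hcount, hprev, hcur⟩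
      have htlen : (α + 1) * i < p.length := getElem?_lt_length hcur
      have hct : ct p ((α + 1) * i) = α * i := hcount
      have hsum := ct_add_cf p ((α + 1) * i) (le_of_lt htlen)
      have harith : (α + 1) * i = α * i + i := by ring
      have hcf : cf p ((α + 1) * i) = i := by omega
      refine absurd hcur (noED_of_above hab ((α + 1) * i) ?_)
      show α * cf p ((α + 1) * i) = ct p ((α + 1) * i)
      rw [hcf, hct]

lemma count_zero_nil {p : List Bool} (h1 : p.count true = 0) (h2 : p.count false = 0) :
    p = [] := by
  have := count_tf p
  rw [← List.length_eq_zero_iff]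
  omega

lemma aset_zero (α : ℕ) : Aset α 0 = {([] : List Bool)} := by
  ext p
  simp only [Aset, Set.mem_setOf_eq, Set.mem_singleton_iff]
  constructor
  · rintro ⟨⟨h1, h2⟩, _⟩
    exact count_zero_nil (by simpa using h1) (by simpa using h2)
  · rintro rfl
    exact ⟨⟨by simp, by simp⟩, fun t => by simp [ct, cf]⟩

lemma hset_zero (α : ℕ) : Hset α 0 = ∅ := by
  ext p
  simp only [Hset, Set.mem_setOf_eq, Set.mem_empty_iff_false, iff_false]
  rintro ⟨⟨h1, h2⟩, hfs, -⟩
  have := count_zero_nil (by simpa using h1) (by simpa using h2)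
  subst this
  simp [FirstStep] at hfs

lemma e'_mem {α j : ℕ} {r : List Bool} (h : r ∈ E'set α j) :
    r.count true = α * j ∧ r.count false = j ∧ (r = [] ∨ r[0]? = some true) := by
  unfold E'set at h
  rcases Nat.eq_zero_or_pos j with rfl | hj
  · simp only [if_pos rfl, Set.mem_singleton_iff] at h
    subst h; simp
  · rw [if_neg (by omega)] at h
    obtain ⟨⟨h1, h2⟩, hfs⟩ := h
    exact ⟨h1, by simpa using h2, Or.inr (by rw [← head?_eq_getElem?]; exact hfs)⟩

lemma lset_finite (α k : ℕ) : (Lset α k).Finite :=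
  (finite_counts (α * k) (1 * k)).subset (fun p hp => ⟨hp.1, hp.2⟩)

lemma eset_finite (α k : ℕ) : (Eset α k).Finite :=
  (lset_finite α k).subset (fun p hp => hp.1)

lemma aset_finite (α k : ℕ) : (Aset α k).Finite :=
  (lset_finite α k).subset (fun p hp => hp.1)

lemma hset_finite (α k : ℕ) : (Hset α k).Finite :=
  (lset_finite α k).subset (fun p hp => hp.1)

lemma e'set_finite (α j : ℕ) : (E'set α j).Finite := by
  unfold E'set
  split
  · exact Set.finite_singleton _
  · exact eset_finite α j

lemma ncard_Lset (α k : ℕ) : (Lset α k).ncard = ((α + 1) * k).choose k := by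
  have : (Lset α k).ncard = ((α * k) + (1 * k)).choose (1 * k) :=
    ncard_counts _ _ _ rfl
  rw [this]
  congr 1 <;> [ring; exact one_mul k]

lemma ncard_Eset (α k : ℕ) (hα : 1 ≤ α) (hk : 1 ≤ k) :
    (Eset α k).ncard = ((α + 1) * k - 1).choose k := by
  have hak : 1 ≤ α * k := Nat.mul_le_mul hα hk
  have himg : Eset α k =
      (fun l : List Bool => true :: l) '' {l | l.count true = α * k - 1 ∧ l.count false = k} := by
    ext p
    constructor
    · rintro ⟨⟨h1, h2⟩, hfs⟩
      match p, hfs with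
      | b :: tl, hfs =>
        have hb : b = true := by simpa [FirstStep] using hfs
        subst hb
        refine ⟨tl, ⟨?_, ?_⟩, rfl⟩
        · simp [List.count_cons] at h1; omega
        · simp [List.count_cons] at h2; omega
    · rintro ⟨l, ⟨h1, h2⟩, rfl⟩
      refine ⟨⟨?_, ?_⟩, by simp [FirstStep]⟩
      · simp [List.count_cons]; omega
      · simp [List.count_cons]; omega
  rw [himg, Set.ncard_image_of_injective _ (fun l1 l2 h => by simpa using h),
    ncard_counts ((α * k - 1) + k) _ _ rfl]
  congr 1
  have : (α + 1) * k = α * k + k := by ring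
  omega

/-! ### Decomposition machinery -/

lemma ncard_biUnion {ι β : Type*} (s : Finset ι) (f : ι → Set β)
    (hfin : ∀ i ∈ s, (f i).Finite)
    (hdisj : ∀ i ∈ s, ∀ j ∈ s, i ≠ j → Disjoint (f i) (f j)) :
    (⋃ i ∈ s, f i).ncard = ∑ i ∈ s, (f i).ncard := by
  classical
  induction s using Finset.induction_on with
  | empty => simp
  | insert a s ha ih =>
    rw [Finset.set_biUnion_insert, Finset.sum_insert ha,
      Set.ncard_union_eq ?disj (hfin a (Finset.mem_insert_self a s)) ?fin2,
      ih (fun i hi => hfin i (Finset.mem_insert_of_mem hi))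
        (fun i hi j hj hij => hdisj i (Finset.mem_insert_of_mem hi) j
          (Finset.mem_insert_of_mem hj) hij)]
    case fin2 =>
      apply Set.Finite.biUnion s.finite_toSet
      intro i hi
      exact hfin i (Finset.mem_insert_of_mem (Finset.mem_coe.mp hi))
    case disj =>
      simp only [Set.disjoint_iUnion_right]
      intro i hi
      exact hdisj a (Finset.mem_insert_self a s) i (Finset.mem_insert_of_mem hi)
        (fun h => ha (h ▸ hi))

lemma ncard_prod {β γ : Type*} (s : Set β) (t : Set γ) :
    (s ×ˢ t).ncard = s.ncard * t.ncard := by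
  rw [← Nat.card_coe_set_eq, ← Nat.card_coe_set_eq, ← Nat.card_coe_set_eq,
    ← Nat.card_prod]
  exact Nat.card_congr (Equiv.Set.prod s t)

lemma not_splitPt_of {α : ℕ} {q : List Bool} (r : List Bool) {s : ℕ} (hs : s < q.length)
    (hfree : OnL α q s → q[s]? ≠ some true) : ¬ SplitPt α (q ++ r) s := by
  rintro ⟨honl, hor⟩
  have hlen : s < (q ++ r).length := by
    rw [List.length_append]; omega
  have hgel : (q ++ r)[s]? = q[s]? := List.getElem?_append_left hs
  have honl' : OnL α q s := by
    show α * cf q s = ct q s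
    have h3 : α * cf (q ++ r) s = ct (q ++ r) s := honl
    rw [ct_append_le q r (le_of_lt hs), cf_append_le q r (le_of_lt hs)] at h3
    exact h3
  rcases hor with heq | htrue
  · omega
  · exact hfree honl' (by rw [← hgel]; exact htrue)

lemma splitPt_append_end {α i : ℕ} {q r : List Bool}
    (hct : q.count true = α * i) (hcf : q.count false = i)
    (hr : r = [] ∨ r[0]? = some true) : SplitPt α (q ++ r) q.length := by
  constructor
  · show α * cf (q ++ r) q.length = ct (q ++ r) q.length
    rw [ct_append_le q r le_rfl, cf_append_le q r le_rfl, ct_length, cf_length, hct, hcf]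
  · rcases hr with rfl | htrue
    · left; simp
    · right
      rw [List.getElem?_append_right le_rfl, Nat.sub_self]
      exact htrue

lemma mem_Aset_length {α i : ℕ} {q : List Bool} (hq : q ∈ Aset α i) :
    q.length = (α + 1) * i := InL_length hq.1

lemma mem_Hset_length {α i : ℕ} {q : List Bool} (hq : q ∈ Hset α i) :
    q.length = (α + 1) * i := InL_length hq.1

lemma append_min_split_A {α i j : ℕ} {q r : List Bool}
    (hq : q ∈ Aset α i) (hr : r ∈ E'set α j) :
    SplitPt α (q ++ r) q.length ∧ ∀ s < q.length, ¬ SplitPt α (q ++ r) s := by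
  obtain ⟨⟨hct, hcf⟩, hab⟩ := hq
  refine ⟨splitPt_append_end hct (by simpa using hcf) (e'_mem hr).2.2, ?_⟩
  intro s hs
  exact not_splitPt_of r hs (noED_of_above hab s)

lemma append_min_split_H {α i j : ℕ} {q r : List Bool}
    (hq : q ∈ Hset α i) (hr : r ∈ E'set α j) :
    SplitPt α (q ++ r) q.length ∧ ∀ s, 1 ≤ s → s < q.length → ¬ SplitPt α (q ++ r) s := by
  obtain ⟨⟨hct, hcf⟩, hfs, hned⟩ := hq
  refine ⟨splitPt_append_end hct (by simpa using hcf) (e'_mem hr).2.2, ?_⟩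
  intro s hs1 hs
  exact not_splitPt_of r hs (fun honl => hned s hs1 honl)

lemma mem_Hset_ne_nil {α i : ℕ} {q : List Bool} (hq : q ∈ Hset α i) : q ≠ [] := by
  intro h
  subst h
  simp [Hset, FirstStep] at hq

lemma decompL (α : ℕ) (hα : 1 ≤ α) (k : ℕ) :
    Lset α k = ⋃ i ∈ Finset.range (k + 1),
      (fun qr : List Bool × List Bool => qr.1 ++ qr.2) '' (Aset α i ×ˢ E'set α (k - i)) := by
  classical
  ext p
  simp only [Set.mem_iUnion, Set.mem_image, Set.mem_prod, Finset.mem_range, exists_prop,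
    Prod.exists]
  constructor
  · intro hp
    have hex : ∃ t, SplitPt α p t := ⟨p.length, onL_length hp, Or.inl rfl⟩
    haveI : DecidablePred (SplitPt α p) := Classical.decPred _
    set t := Nat.find hex with hfind
    have hsp : SplitPt α p t := Nat.find_spec hex
    have hmin : ∀ s < t, ¬ SplitPt α p s := fun s hs => Nat.find_min hex hs
    have htlen : t ≤ p.length := by
      rcases hsp.2 with heq | htrue
      · omega
      · exact le_of_lt (getElem?_lt_length htrue)
    have hct : ct p t = α * cf p t := hsp.1.symm
    have hteq : t = (α + 1) * cf p t := onL_time hsp.1 htlen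
    set i := cf p t with hidef
    have hik : i ≤ k := by
      have h1 : cf p t ≤ cf p p.length := cf_mono p htlen
      rw [cf_length, hp.2, one_mul] at h1
      exact h1
    have hqlen : (p.take t).length = t := by
      rw [List.length_take]; omega
    have hqct : (p.take t).count true = α * i := hct
    have hqcf : (p.take t).count false = i := rfl
    have hqmem : p.take t ∈ Aset α i := by
      refine ⟨⟨hqct, by simpa using hqcf⟩, ?_⟩
      refine above_of' α hα _ ?_ ?_
      · rcases Nat.eq_zero_or_pos t with ht0 | ht1
        · rw [ht0]; simp
        · rw [List.getElem?_take_of_lt ht1]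
          intro htr
          exact hmin 0 ht1 ⟨onL_zero α p, Or.inr htr⟩
      · intro s hs1 hslen honl htrue hprev
        rw [hqlen] at hslen
        have honl' : OnL α p s := by
          show α * cf p s = ct p s
          have h3 : α * cf (p.take t) s = ct (p.take t) s := honl
          rw [ct_take p (le_of_lt hslen), cf_take p (le_of_lt hslen)] at h3
          exact h3
        rw [List.getElem?_take_of_lt hslen] at htrue
        exact hmin s hslen ⟨honl', Or.inr htrue⟩
    -- suffix counts
    have hcount : p.take t ++ p.drop t = p := List.take_append_drop t p
    have hctp : (p.take t).count true + (p.drop t).count true = p.count true := by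
      rw [← List.count_append, hcount]
    have hcfp : (p.take t).count false + (p.drop t).count false = p.count false := by
      rw [← List.count_append, hcount]
    have hmulsplit : α * k = α * i + α * (k - i) := by
      rw [← Nat.mul_add]
      congr 1
      omega
    have hrct : (p.drop t).count true = α * (k - i) := by
      have := hp.1; omega
    have hrcf : (p.drop t).count false = k - i := by
      have := hp.2; rw [one_mul] at this; omega
    have hrmem : p.drop t ∈ E'set α (k - i) := by
      unfold E'set
      rcases Nat.eq_zero_or_pos (k - i) with hki | hki
      · rw [if_pos hki]
        have : p.drop t = [] := count_zero_nil (by rw [hrct, hki, mul_zero]) (by omega)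
        simp [this]
      · rw [if_neg (by omega)]
        refine ⟨⟨hrct, by simpa using hrcf⟩, ?_⟩
        rcases hsp.2 with heq | htrue
        · exfalso
          have : p.drop t = [] := by
            rw [heq]; simp
          rw [this] at hrcf
          simp at hrcf
          omega
        · rw [FirstStep, head?_eq_getElem?, List.getElem?_drop, Nat.add_zero]
          exact htrue
    exact ⟨i, by omega, p.take t, p.drop t, ⟨hqmem, hrmem⟩, hcount⟩
  · rintro ⟨i, hik, q, r, ⟨hq, hr⟩, rfl⟩
    obtain ⟨⟨hct, hcf⟩, -⟩ := hq
    obtain ⟨hrct, hrcf, -⟩ := e'_mem hr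
    have hmulsplit : α * k = α * i + α * (k - i) := by
      rw [← Nat.mul_add]; congr 1; omega
    constructor
    · rw [List.count_append]; omega
    · rw [List.count_append]; rw [one_mul] at hcf ⊢; omega

lemma decompE (α : ℕ) (k : ℕ) (hk : 1 ≤ k) :
    Eset α k = ⋃ i ∈ Finset.range (k + 1),
      (fun qr : List Bool × List Bool => qr.1 ++ qr.2) '' (Hset α i ×ˢ E'set α (k - i)) := by
  classical
  ext p
  simp only [Set.mem_iUnion, Set.mem_image, Set.mem_prod, Finset.mem_range, exists_prop,
    Prod.exists]
  constructor
  · rintro ⟨hp, hfs⟩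
    have hplen : p.length = (α + 1) * k := InL_length hp
    have hlen1 : 1 ≤ p.length := by
      have : (α + 1) * k ≥ 1 * 1 := Nat.mul_le_mul (by omega) hk
      omega
    have hex : ∃ t, SplitPt α p t ∧ 1 ≤ t :=
      ⟨p.length, ⟨onL_length hp, Or.inl rfl⟩, hlen1⟩
    haveI : DecidablePred (fun t => SplitPt α p t ∧ 1 ≤ t) := Classical.decPred _
    set t := Nat.find hex with hfind
    obtain ⟨hsp, ht1⟩ : SplitPt α p t ∧ 1 ≤ t := Nat.find_spec hex
    have hmin : ∀ s < t, ¬ (SplitPt α p s ∧ 1 ≤ s) := fun s hs => Nat.find_min hex hs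
    have htlen : t ≤ p.length := by
      rcases hsp.2 with heq | htrue
      · omega
      · exact le_of_lt (getElem?_lt_length htrue)
    have hct : ct p t = α * cf p t := hsp.1.symm
    have hteq : t = (α + 1) * cf p t := onL_time hsp.1 htlen
    set i := cf p t with hidef
    have hik : i ≤ k := by
      have h1 : cf p t ≤ cf p p.length := cf_mono p htlen
      rw [cf_length, hp.2, one_mul] at h1
      exact h1
    have hqlen : (p.take t).length = t := by
      rw [List.length_take]; omega
    have hqmem : p.take t ∈ Hset α i := by
      refine ⟨⟨hct, by rw [one_mul, hidef]; rfl⟩, ?_, ?_⟩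
      · rw [FirstStep, head?_eq_getElem?, List.getElem?_take_of_lt ht1, ← head?_eq_getElem?]
        exact hfs
      · intro s hs1 honl htrue
        have hslen : s < t := by
          rcases Nat.lt_or_ge s t with h | h
          · exact h
          · exfalso
            rw [List.getElem?_eq_none (by simp [List.length_take]; omega)] at htrue
            exact absurd htrue (by simp)
        have honl' : OnL α p s := by
          show α * cf p s = ct p s
          have h3 : α * cf (p.take t) s = ct (p.take t) s := honl
          rw [ct_take p (le_of_lt hslen), cf_take p (le_of_lt hslen)] at h3
          exact h3
        rw [List.getElem?_take_of_lt hslen] at htrue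
        exact hmin s hslen ⟨⟨honl', Or.inr htrue⟩, hs1⟩
    have hcount : p.take t ++ p.drop t = p := List.take_append_drop t p
    have hctp : (p.take t).count true + (p.drop t).count true = p.count true := by
      rw [← List.count_append, hcount]
    have hcfp : (p.take t).count false + (p.drop t).count false = p.count false := by
      rw [← List.count_append, hcount]
    have hmulsplit : α * k = α * i + α * (k - i) := by
      rw [← Nat.mul_add]; congr 1; omega
    have hrct : (p.drop t).count true = α * (k - i) := by
      have h1 : (p.take t).count true = α * i := hct
      have := hp.1; omega
    have hrcf : (p.drop t).count false = k - i := by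
      have h1 : (p.take t).count false = i := rfl
      have := hp.2; rw [one_mul] at this; omega
    have hrmem : p.drop t ∈ E'set α (k - i) := by
      unfold E'set
      rcases Nat.eq_zero_or_pos (k - i) with hki | hki
      · rw [if_pos hki]
        have : p.drop t = [] := count_zero_nil (by rw [hrct, hki, mul_zero]) (by omega)
        simp [this]
      · rw [if_neg (by omega)]
        refine ⟨⟨hrct, by simpa using hrcf⟩, ?_⟩
        rcases hsp.2 with heq | htrue
        · exfalso
          have : p.drop t = [] := by rw [heq]; simp
          rw [this] at hrcf
          simp at hrcf
          omega
        · rw [FirstStep, head?_eq_getElem?, List.getElem?_drop, Nat.add_zero]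
          exact htrue
    exact ⟨i, by omega, p.take t, p.drop t, ⟨hqmem, hrmem⟩, hcount⟩
  · rintro ⟨i, hik, q, r, ⟨hq, hr⟩, rfl⟩
    have hqne : q ≠ [] := mem_Hset_ne_nil hq
    obtain ⟨⟨hct, hcf⟩, hfs, -⟩ := hq
    obtain ⟨hrct, hrcf, -⟩ := e'_mem hr
    have hmulsplit : α * k = α * i + α * (k - i) := by
      rw [← Nat.mul_add]; congr 1; omega
    refine ⟨⟨?_, ?_⟩, ?_⟩
    · rw [List.count_append]; omega
    · rw [List.count_append]; rw [one_mul] at hcf ⊢; omega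
    · match q, hqne with
      | b :: q', _ =>
        have : b = true := by simpa [FirstStep] using hfs
        subst this
        simp [FirstStep]

lemma card_decompL (α : ℕ) (hα : 1 ≤ α) (k : ℕ) :
    (Lset α k).ncard
      = ∑ i ∈ Finset.range (k + 1), (Aset α i).ncard * (E'set α (k - i)).ncard := by
  rw [decompL α hα k]
  rw [ncard_biUnion]
  · apply Finset.sum_congr rfl
    intro i _
    rw [Set.ncard_image_of_injOn, ncard_prod]
    rintro ⟨q, r⟩ ⟨hq, hr⟩ ⟨q', r'⟩ ⟨hq', hr'⟩ heq
    simp only at heq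
    have hl : q.length = q'.length := by
      rw [mem_Aset_length hq, mem_Aset_length hq']
    obtain ⟨h1, h2⟩ := List.append_inj heq hl
    simp [h1, h2]
  · intro i _
    exact ((aset_finite α i).prod (e'set_finite α (k - i))).image _
  · intro i _ j _ hij
    rw [Set.disjoint_left]
    rintro p ⟨⟨q, r⟩, ⟨hq, hr⟩, rfl⟩ ⟨⟨q', r'⟩, ⟨hq', hr'⟩, heq⟩
    simp only at heq
    obtain ⟨hsp1, hmin1⟩ := append_min_split_A hq hr
    obtain ⟨hsp2, hmin2⟩ := append_min_split_A hq' hr'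
    rw [heq] at hsp2 hmin2
    have hll : q.length = q'.length := by
      rcases Nat.lt_trichotomy q.length q'.length with h | h | h
      · exact absurd hsp1 (hmin2 _ h)
      · exact h
      · exact absurd hsp2 (hmin1 _ h)
    rw [mem_Aset_length hq, mem_Aset_length hq'] at hll
    exact hij (Nat.eq_of_mul_eq_mul_left (by omega) hll)

lemma card_decompE (α : ℕ) (k : ℕ) (hk : 1 ≤ k) :
    (Eset α k).ncard
      = ∑ i ∈ Finset.range (k + 1), (Hset α i).ncard * (E'set α (k - i)).ncard := by
  rw [decompE α k hk]
  rw [ncard_biUnion]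
  · apply Finset.sum_congr rfl
    intro i _
    rw [Set.ncard_image_of_injOn, ncard_prod]
    rintro ⟨q, r⟩ ⟨hq, hr⟩ ⟨q', r'⟩ ⟨hq', hr'⟩ heq
    simp only at heq
    have hl : q.length = q'.length := by
      rw [mem_Hset_length hq, mem_Hset_length hq']
    obtain ⟨h1, h2⟩ := List.append_inj heq hl
    simp [h1, h2]
  · intro i _
    exact ((hset_finite α i).prod (e'set_finite α (k - i))).image _
  · intro i _ j _ hij
    rw [Set.disjoint_left]
    rintro p ⟨⟨q, r⟩, ⟨hq, hr⟩, rfl⟩ ⟨⟨q', r'⟩, ⟨hq', hr'⟩, heq⟩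
    simp only at heq
    obtain ⟨hsp1, hmin1⟩ := append_min_split_H hq hr
    obtain ⟨hsp2, hmin2⟩ := append_min_split_H hq' hr'
    rw [heq] at hsp2 hmin2
    have hq1 : 1 ≤ q.length := by
      have := mem_Hset_ne_nil hq
      cases q
      · simp at this
      · simp
    have hq'1 : 1 ≤ q'.length := by
      have := mem_Hset_ne_nil hq'
      cases q'
      · simp at this
      · simp
    have hll : q.length = q'.length := by
      rcases Nat.lt_trichotomy q.length q'.length with h | h | h
      · exact absurd hsp1 (hmin2 _ hq1 h)
      · exact h
      · exact absurd hsp2 (hmin1 _ hq'1 h)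
    rw [mem_Hset_length hq, mem_Hset_length hq'] at hll
    exact hij (Nat.eq_of_mul_eq_mul_left (by omega) hll)

/-! ### The cycle lemma -/

noncomputable def Sz (α : ℕ) (l : List Bool) (t : ℕ) : ℤ := (ct l t : ℤ) - α * (cf l t : ℤ)
noncomputable def SzT (α : ℕ) (l : List Bool) : ℤ :=
  (l.count true : ℤ) - α * (l.count false : ℤ)
def Posi (α : ℕ) (l : List Bool) : Prop := ∀ t, 1 ≤ t → t ≤ l.length → 0 < Sz α l t
def Fk (α k : ℕ) : Set LatticePath := {l | l.count true = α * k + 1 ∧ l.count false = k}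
def Pset (α k : ℕ) : Set LatticePath := {l | l ∈ Fk α k ∧ Posi α l}

lemma Sz_zero (α : ℕ) (l : List Bool) : Sz α l 0 = 0 := by simp [Sz, ct, cf]

lemma Sz_length (α : ℕ) (l : List Bool) : Sz α l l.length = SzT α l := by
  simp [Sz, SzT, ct_length, cf_length]

lemma Sz_of_le (α : ℕ) (l : List Bool) {t : ℕ} (h : l.length ≤ t) : Sz α l t = SzT α l := by
  simp [Sz, SzT, ct_of_le l h, cf_of_le l h]

lemma count_rotate_le (b : Bool) (l : List Bool) (r t : ℕ)
    (hr : r ≤ l.length) (ht : t ≤ l.length - r) :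
    (l.take r).count b + ((l.rotate r).take t).count b = (l.take (r + t)).count b := by
  have e1 : (l.rotate r).take t = (l.take (r + t)).drop r := by
    rw [List.rotate_eq_drop_append_take hr, List.take_append,
      List.length_drop, Nat.sub_eq_zero_of_le ht, List.take_zero, List.append_nil,
      List.drop_take]
    congr 1
    omega
  have e2 : (l.take (r + t)).take r = l.take r := by
    rw [List.take_take, min_eq_left (by omega)]
  have e3 := List.take_append_drop r (l.take (r + t))
  have e4 : (l.take (r + t)).count b
      = ((l.take (r + t)).take r).count b + ((l.take (r + t)).drop r).count b := by
    rw [← List.count_append, e3]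
  rw [e1, e4, e2]

lemma count_rotate_gt (b : Bool) (l : List Bool) (r t : ℕ)
    (hr : r ≤ l.length) (ht1 : l.length - r ≤ t) (ht2 : t ≤ l.length) :
    (l.take r).count b + ((l.rotate r).take t).count b
      = l.count b + (l.take (t - (l.length - r))).count b := by
  have e1 : (l.rotate r).take t = l.drop r ++ (l.take (t - (l.length - r))) := by
    rw [List.rotate_eq_drop_append_take hr, List.take_append,
      List.take_of_length_le (by rw [List.length_drop]; omega), List.length_drop,
      List.take_take, min_eq_left (by omega)]
  have e2 : (l.take r).count b + (l.drop r).count b = l.count b := by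
    rw [← List.count_append, List.take_append_drop]
  rw [e1, List.count_append]
  omega

lemma Sz_rotate_le (α : ℕ) (l : List Bool) (r t : ℕ)
    (hr : r ≤ l.length) (ht : t ≤ l.length - r) :
    Sz α (l.rotate r) t = Sz α l (r + t) - Sz α l r := by
  have h1 := count_rotate_le true l r t hr ht
  have h2 := count_rotate_le false l r t hr ht
  unfold Sz ct cf
  zify at h1 h2
  linear_combination h1 - (α : ℤ) * h2

lemma Sz_rotate_gt (α : ℕ) (l : List Bool) (r t : ℕ)
    (hr : r ≤ l.length) (ht1 : l.length - r ≤ t) (ht2 : t ≤ l.length) :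
    Sz α (l.rotate r) t = SzT α l + Sz α l (t - (l.length - r)) - Sz α l r := by
  have h1 := count_rotate_gt true l r t hr ht1 ht2
  have h2 := count_rotate_gt false l r t hr ht1 ht2
  unfold Sz SzT ct cf
  zify at h1 h2
  linear_combination h1 - (α : ℤ) * h2

lemma posi_rotate_iff (α : ℕ) {l : List Bool} {r : ℕ} (hr : r < l.length)
    (hsum : SzT α l = 1) :
    Posi α (l.rotate r) ↔
      (∀ j, r < j → j ≤ l.length → Sz α l r < Sz α l j) ∧
      (∀ j, 1 ≤ j → j ≤ r → Sz α l r ≤ Sz α l j) := by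
  set m := l.length with hm
  constructor
  · intro hp
    constructor
    · intro j hj1 hj2
      have ht := hp (j - r) (by omega) (by rw [List.length_rotate]; omega)
      rw [Sz_rotate_le α l r (j - r) (by omega) (by omega),
        show r + (j - r) = j by omega] at ht
      omega
    · intro j hj1 hj2
      have ht := hp (j + (m - r)) (by omega) (by rw [List.length_rotate]; omega)
      rw [Sz_rotate_gt α l r (j + (m - r)) (by omega) (by omega) (by omega),
        show j + (m - r) - (m - r) = j by omega, hsum] at ht
      omega
  · rintro ⟨h1, h2⟩ t ht1 ht2
    rw [List.length_rotate] at ht2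
    rcases le_or_gt t (m - r) with hc | hc
    · rw [Sz_rotate_le α l r t (by omega) hc]
      have := h1 (r + t) (by omega) (by omega)
      omega
    · rw [Sz_rotate_gt α l r t (by omega) (by omega) ht2, hsum, ← hm]
      have := h2 (t - (m - r)) (by omega) (by omega)
      omega

lemma cycle_exists_unique (α : ℕ) (l : List Bool) (hsum : SzT α l = 1)
    (hm1 : 1 ≤ l.length) :
    ∃! r, r < l.length ∧ Posi α (l.rotate r) := by
  classical
  set m := l.length with hm
  set S : ℕ → ℤ := fun j => Sz α l j with hS
  -- last argmin
  set B : Finset ℕ := (Finset.range m).filter (fun j => ∀ i ∈ Finset.range m, S j ≤ S i)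
    with hB
  have hBne : B.Nonempty := by
    obtain ⟨x, hx, hxmin⟩ := Finset.exists_min_image (Finset.range m) S
      ⟨0, Finset.mem_range.mpr (by omega)⟩
    exact ⟨x, Finset.mem_filter.mpr ⟨hx, hxmin⟩⟩
  set r := B.max' hBne with hrdef
  have hrB : r ∈ B := B.max'_mem hBne
  have hrm : r < m := Finset.mem_range.mp (Finset.mem_filter.mp hrB).1
  have hrmin : ∀ i ∈ Finset.range m, S r ≤ S i := (Finset.mem_filter.mp hrB).2
  have hrlast : ∀ j ∈ B, j ≤ r := fun j hj => Finset.le_max' B j hj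
  have hS0 : S 0 = 0 := Sz_zero α l
  have hSm : S m = 1 := by rw [hS]; simp only; rw [hm, Sz_length, hsum]
  have hr0 : S r ≤ 0 := by
    have := hrmin 0 (Finset.mem_range.mpr (by omega))
    omega
  have hchar : ∀ j, r < j → j ≤ m → S r < S j := by
    intro j hj1 hj2
    rcases Nat.lt_or_ge j m with hjm | hjm
    · have hle := hrmin j (Finset.mem_range.mpr hjm)
      rcases lt_or_eq_of_le hle with h | h
      · exact h
      · exfalso
        have hjB : j ∈ B := Finset.mem_filter.mpr ⟨Finset.mem_range.mpr hjm,
          fun i hi => by rw [← h]; exact hrmin i hi⟩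
        have := hrlast j hjB
        omega
    · have : j = m := by omega
      rw [this, hSm]
      omega
  have hex : r < m ∧ Posi α (l.rotate r) := by
    refine ⟨hrm, (posi_rotate_iff α hrm hsum).mpr ⟨hchar, ?_⟩⟩
    intro j hj1 hj2
    exact hrmin j (Finset.mem_range.mpr (by omega))
  -- uniqueness: no two distinct positive rotations
  have key : ∀ r1 r2, r1 < r2 → r2 < m →
      Posi α (l.rotate r1) → Posi α (l.rotate r2) → False := by
    intro r1 r2 h12 h2m hp1 hp2
    have hc1 := (posi_rotate_iff α (show r1 < m by omega) hsum).mp hp1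
    have hc2 := (posi_rotate_iff α (show r2 < m by omega) hsum).mp hp2
    have hlt : S r1 < S r2 := hc1.1 r2 h12 (by omega)
    rcases Nat.eq_zero_or_pos r1 with rfl | hr1
    · have h01 : (0 : ℤ) < S r2 := by
        have := hS0
        omega
      have h02 : S r2 < S m := hc2.1 m (by omega) le_rfl
      rw [hSm] at h02
      omega
    · have h21 : S r2 ≤ S r1 := hc2.2 r1 hr1 (by omega)
      omega
  refine ⟨r, hex, ?_⟩
  rintro r' ⟨hr'm, hp'⟩
  by_contra hne
  rcases Nat.lt_or_ge r' r with h | h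
  · exact key r' r h hrm hp' hex.2
  · exact key r r' (by omega) hr'm hex.2 hp'

lemma mem_Fk_length {α k : ℕ} {l : List Bool} (h : l ∈ Fk α k) :
    l.length = (α + 1) * k + 1 := by
  have := count_tf l
  have h1 := h.1; have h2 := h.2
  have : (α + 1) * k = α * k + k := by ring
  omega

lemma mem_Fk_szt {α k : ℕ} {l : List Bool} (h : l ∈ Fk α k) : SzT α l = 1 := by
  unfold SzT
  rw [h.1, h.2]
  push_cast
  ring

lemma Fk_rotate {α k : ℕ} {l : List Bool} (h : l ∈ Fk α k) (r : ℕ) :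
    l.rotate r ∈ Fk α k := by
  have hperm := List.rotate_perm l r
  exact ⟨by rw [hperm.count_eq, h.1], by rw [hperm.count_eq, h.2]⟩

lemma fk_finite (α k : ℕ) : (Fk α k).Finite := finite_counts _ _

lemma pset_finite (α k : ℕ) : (Pset α k).Finite := (fk_finite α k).subset (fun l hl => hl.1)

lemma card_Fk (α k : ℕ) : (Fk α k).ncard = ((α + 1) * k + 1).choose k := by
  have h := ncard_counts ((α * k + 1) + k) (α * k + 1) k rfl
  have e : (α * k + 1) + k = (α + 1) * k + 1 := by ring
  rw [e] at h
  exact h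

lemma rotate_unrotate {q : List Bool} {m r : ℕ} (hq : q.length = m) (hr : r < m) :
    ∀ w : List Bool, w = q.rotate r → w.rotate ((m - r) % m) = q := by
  rintro w rfl
  have hlen : (q.rotate r).length = m := by rw [List.length_rotate, hq]
  rw [← hlen, List.rotate_mod, hlen, List.rotate_rotate,
    show r + (m - r) = m by omega, ← hq, List.rotate_length]

lemma card_cycle (α k : ℕ) :
    ((α + 1) * k + 1) * (Pset α k).ncard = ((α + 1) * k + 1).choose k := by
  classical
  set m := (α + 1) * k + 1 with hmdef
  have hm1 : 1 ≤ m := by omega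
  have himg : Fk α k =
      (fun qr : List Bool × ℕ => qr.1.rotate qr.2) '' (Pset α k ×ˢ Set.Iio m) := by
    ext l
    constructor
    · intro hl
      have hlen : l.length = m := mem_Fk_length hl
      obtain ⟨r, ⟨hrm, hposi⟩, -⟩ := cycle_exists_unique α l (mem_Fk_szt hl)
        (by omega)
      rw [hlen] at hrm
      refine ⟨(l.rotate r, (m - r) % m), ⟨⟨Fk_rotate hl r, hposi⟩, ?_⟩, ?_⟩
      · exact Nat.mod_lt _ (by omega)
      · exact rotate_unrotate hlen hrm _ rfl
    · rintro ⟨⟨q, r⟩, ⟨hq, -⟩, rfl⟩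
      exact Fk_rotate hq.1 r
  have hinj : Set.InjOn (fun qr : List Bool × ℕ => qr.1.rotate qr.2)
      (Pset α k ×ˢ Set.Iio m) := by
    rintro ⟨q, r⟩ ⟨⟨hqF, hqP⟩, hrm⟩ ⟨q', r'⟩ ⟨⟨hq'F, hq'P⟩, hr'm⟩ heq
    simp only at heq
    simp only [Set.mem_Iio] at hrm hr'm
    have hqlen : q.length = m := mem_Fk_length hqF
    have hq'len : q'.length = m := mem_Fk_length hq'F
    set w := q.rotate r with hwdef
    have hwF : w ∈ Fk α k := Fk_rotate hqF r
    have hwlen : w.length = m := mem_Fk_length hwF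
    have hback : w.rotate ((m - r) % m) = q := rotate_unrotate hqlen hrm w rfl
    have hback' : w.rotate ((m - r') % m) = q' := rotate_unrotate hq'len hr'm w heq
    have hEU := cycle_exists_unique α w (mem_Fk_szt hwF) (by omega)
    obtain ⟨r0, -, huniq⟩ := hEU
    have e1 : (m - r) % m = r0 := huniq _ ⟨by rw [hwlen]; exact Nat.mod_lt _ (by omega),
      by rw [hback]; exact hqP⟩
    have e2 : (m - r') % m = r0 := huniq _ ⟨by rw [hwlen]; exact Nat.mod_lt _ (by omega),
      by rw [hback']; exact hq'P⟩
    have hrr : r = r' := by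
      rcases Nat.eq_zero_or_pos r with rfl | hr1 <;>
        rcases Nat.eq_zero_or_pos r' with rfl | hr'1
      · rfl
      · exfalso
        rw [Nat.sub_zero, Nat.mod_self] at e1
        rw [Nat.mod_eq_of_lt (by omega)] at e2
        omega
      · exfalso
        rw [Nat.sub_zero, Nat.mod_self] at e2
        rw [Nat.mod_eq_of_lt (by omega)] at e1
        omega
      · rw [Nat.mod_eq_of_lt (by omega)] at e1
        rw [Nat.mod_eq_of_lt (by omega)] at e2
        omega
    subst hrr
    have : q = q' := by rw [← hback, ← hback']
    simp [this]
  have hcard : (Fk α k).ncard = (Pset α k).ncard * m := by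
    rw [himg, Set.ncard_image_of_injOn hinj, ncard_prod, ← Finset.coe_Iio,
      Set.ncard_coe_finset, Nat.card_Iio]
  rw [← card_Fk, hcard]
  ring

/-! ### Bijection between above paths and positive cycles -/

lemma count_reverse_take (b : Bool) (p : List Bool) {s : ℕ} (hs : s ≤ p.length) :
    ((p.reverse).take s).count b + (p.take (p.length - s)).count b = p.count b := by
  have e1 : (p.take (p.length - s)).reverse = p.reverse.drop (p.length - (p.length - s)) :=
    List.reverse_take
  rw [show p.length - (p.length - s) = s by omega] at e1
  have e2 : ((p.reverse).take s).count b + ((p.reverse).drop s).count b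
      = (p.reverse).count b := by
    rw [← List.count_append, List.take_append_drop]
  rw [← e1] at e2
  rw [List.count_reverse] at e2
  rw [List.count_reverse] at e2
  exact e2

lemma Sz_phi (α : ℕ) (p : List Bool) {t : ℕ} (ht1 : 1 ≤ t) (ht2 : t ≤ p.length + 1) :
    Sz α (true :: p.reverse) t = 1 + SzT α p - Sz α p (p.length + 1 - t) := by
  obtain ⟨s, rfl⟩ : ∃ s, t = s + 1 := ⟨t - 1, by omega⟩
  have hs : s ≤ p.length := by omega
  have e0 : (true :: p.reverse).take (s + 1) = true :: (p.reverse).take s :=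
    List.take_succ_cons
  have h1 := count_reverse_take true p hs
  have h2 := count_reverse_take false p hs
  have ect : ct (true :: p.reverse) (s + 1) = ((p.reverse).take s).count true + 1 := by
    unfold ct; rw [e0]; simp [List.count_cons]
  have ecf : cf (true :: p.reverse) (s + 1) = ((p.reverse).take s).count false := by
    unfold cf; rw [e0]; simp [List.count_cons]
  have hidx : p.length + 1 - (s + 1) = p.length - s := by omega
  rw [hidx]
  unfold Sz SzT ct cf at *
  rw [ect, ecf]
  zify at h1 h2
  push_cast
  linear_combination h1 - (α : ℤ) * h2

lemma above_iff_sz {α : ℕ} {p : List Bool} :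
    Above α p ↔ ∀ u, Sz α p u ≤ 0 := by
  unfold Above Sz
  constructor
  · intro h u
    have := h u
    have h2 : (ct p u : ℤ) ≤ (α : ℤ) * (cf p u : ℤ) := by exact_mod_cast this
    omega
  · intro h u
    have := h u
    have h2 : (ct p u : ℤ) ≤ (α : ℤ) * (cf p u : ℤ) := by omega
    exact_mod_cast h2

lemma card_Aset_eq_Pset (α k : ℕ) : (Aset α k).ncard = (Pset α k).ncard := by
  have himg : Pset α k = (fun p : List Bool => true :: p.reverse) '' Aset α k := by
    ext w
    constructor
    · rintro ⟨hwF, hwP⟩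
      have hwlen : w.length = (α + 1) * k + 1 := mem_Fk_length hwF
      match w, hwlen with
      | b :: w', hwlen =>
        have hb : b = true := by
          have h1 := hwP 1 le_rfl (by simp)
          rcases b with _ | _
          · exfalso
            have ect : ct (false :: w') 1 = 0 := by simp [ct, List.count_cons]
            have ecf : cf (false :: w') 1 = 1 := by simp [cf, List.count_cons]
            unfold Sz at h1
            rw [ect, ecf] at h1
            push_cast at h1
            omega
          · rfl
        subst hb
        refine ⟨w'.reverse, ⟨⟨?_, ?_⟩, ?_⟩, by simp⟩
        · have := hwF.1; simp [List.count_cons, List.count_reverse] at this ⊢; omega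
        · have := hwF.2; simp [List.count_cons, List.count_reverse] at this ⊢; omega
        · -- above
          rw [above_iff_sz]
          intro u
          have hlen' : w'.reverse.length = (α + 1) * k := by
            simp at hwlen ⊢; omega
          rcases le_or_gt u (w'.reverse.length) with hu | hu
          · set pp := w'.reverse with hpp
            have hre : true :: pp.reverse = true :: w' := by simp [hpp]
            have hSzT : SzT α pp = 0 := by
              unfold SzT
              have a1 := hwF.1; have a2 := hwF.2
              simp [hpp, List.count_cons, List.count_reverse] at a1 a2
              rw [hpp]
              simp [List.count_reverse]
              rw [show w'.count true = α * k by omega, show w'.count false = k by omega]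
              push_cast; ring
            have hphi := Sz_phi α pp (show 1 ≤ pp.length + 1 - u by omega)
              (show pp.length + 1 - u ≤ pp.length + 1 by omega)
            rw [show pp.length + 1 - (pp.length + 1 - u) = u by omega, hSzT] at hphi
            have hP := hwP (pp.length + 1 - u) (by omega)
              (by simp only [List.length_cons]; simp [hpp])
            rw [hre] at hphi
            omega
          · rw [Sz_of_le α _ (le_of_lt hu), ← Sz_length]
            have hlen2 := Sz_of_le α w'.reverse (le_refl w'.reverse.length)
            rw [Sz_length]
            -- SzT = 0 again
            have a1 := hwF.1; have a2 := hwF.2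
            unfold SzT
            simp [List.count_cons, List.count_reverse] at a1 a2
            simp [List.count_reverse]
            rw [show w'.count true = α * k by omega, show w'.count false = k by omega]
            push_cast; ring_nf
            omega
    · rintro ⟨p, ⟨⟨hct, hcf⟩, hab⟩, rfl⟩
      rw [one_mul] at hcf
      have hplen : p.length = (α + 1) * k := by
        have := count_tf p
        have : (α + 1) * k = α * k + k := by ring
        omega
      have hmemF : (true :: p.reverse) ∈ Fk α k := by
        constructor
        · simp [List.count_cons, List.count_reverse, hct]
        · simp [List.count_cons, List.count_reverse, hcf]
      refine ⟨hmemF, ?_⟩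
      intro t ht1 ht2
      simp only [List.length_cons, List.length_reverse] at ht2
      have hphi := Sz_phi α p ht1 (by omega)
      have hSzT : SzT α p = 0 := by
        unfold SzT
        rw [hct, hcf]
        push_cast; ring
      rw [hphi, hSzT]
      have := (above_iff_sz.mp hab) (p.length + 1 - t)
      omega
  rw [himg, Set.ncard_image_of_injective]
  intro p q h
  simpa using h

lemma card_Aset (α k : ℕ) : (α * k + 1) * (Aset α k).ncard = ((α + 1) * k).choose k := by
  set m := (α + 1) * k + 1 with hmdef
  have h1 : m * (Pset α k).ncard = m.choose k := card_cycle α k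
  have habs : (m - k) * m.choose k = m * (m - 1).choose k := by
    have e1 := Nat.choose_succ_right_eq m k
    have e2 := Nat.add_one_mul_choose_eq (m - 1) k
    rw [show m - 1 + 1 = m by omega] at e2
    rw [e2, e1]
    ring
  have hmk : m - k = α * k + 1 := by
    have : (α + 1) * k = α * k + k := by ring
    omega
  have hm1 : m - 1 = (α + 1) * k := by omega
  rw [card_Aset_eq_Pset]
  have : m * ((α * k + 1) * (Pset α k).ncard) = m * ((α + 1) * k).choose k := by
    calc m * ((α * k + 1) * (Pset α k).ncard)
        = (α * k + 1) * (m * (Pset α k).ncard) := by ring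
      _ = (α * k + 1) * m.choose k := by rw [h1]
      _ = (m - k) * m.choose k := by rw [hmk]
      _ = m * (m - 1).choose k := habs
      _ = m * ((α + 1) * k).choose k := by rw [hm1]
  exact Nat.eq_of_mul_eq_mul_left (by omega) this

/-! ### Power series assembly -/

noncomputable def Gser (α : ℕ) : PowerSeries ℚ :=
  PowerSeries.mk fun k => if k = 0 then 0 else ((((α + 1) * k - 1).choose k : ℕ) : ℚ)
noncomputable def Tser (α : ℕ) : PowerSeries ℚ :=
  PowerSeries.mk fun k => ((((α + 1) * k).choose k : ℕ) : ℚ)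
noncomputable def Aser (α : ℕ) : PowerSeries ℚ :=
  PowerSeries.mk fun k => ((Aset α k).ncard : ℚ)

lemma absorb (m k : ℕ) (hm : 1 ≤ m) : (m - k) * m.choose k = m * (m - 1).choose k := by
  have e1 := Nat.choose_succ_right_eq m k
  have e2 := Nat.add_one_mul_choose_eq (m - 1) k
  rw [show m - 1 + 1 = m by omega] at e2
  rw [e2, e1]
  ring

lemma pascal_step (α k : ℕ) (hα : 1 ≤ α) (hk : 1 ≤ k) :
    ((α + 1) * k - 2).choose (1 * k) + ((α + 1) * k - 2).choose (α * k - 1)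
      = ((α + 1) * k - 1).choose k := by
  have hmul : (α + 1) * k = α * k + k := by ring
  have hak : 1 ≤ α * k := Nat.mul_le_mul hα hk
  have hsymm : ((α + 1) * k - 2).choose (((α + 1) * k - 2) - (α * k - 1))
      = ((α + 1) * k - 2).choose (α * k - 1) :=
    Nat.choose_symm (by omega)
  rw [show ((α + 1) * k - 2) - (α * k - 1) = k - 1 by omega] at hsymm
  rw [one_mul, ← hsymm]
  have hps := Nat.choose_succ_succ' ((α + 1) * k - 2) (k - 1)
  rw [show ((α + 1) * k - 2) + 1 = (α + 1) * k - 1 by omega,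
    show (k - 1) + 1 = k by omega] at hps
  omega

lemma binom_step (α k : ℕ) (hα : 1 ≤ α) (hk : 1 ≤ k) :
    (1 + α) * (((α + 1) * k - 1).choose k) = α * (((α + 1) * k).choose k) := by
  have hmul : (α + 1) * k = α * k + k := by ring
  have hak : 1 ≤ α * k := Nat.mul_le_mul hα hk
  have habs := absorb ((α + 1) * k) k (by omega)
  rw [show (α + 1) * k - k = α * k by omega] at habs
  -- α * k * choose = (α+1)*k * choose'
  have h2 : k * (α * (((α + 1) * k).choose k)) = k * ((1 + α) * (((α + 1) * k - 1).choose k)) := by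
    calc k * (α * (((α + 1) * k).choose k)) = (α * k) * (((α + 1) * k).choose k) := by ring
      _ = ((α + 1) * k) * (((α + 1) * k - 1).choose k) := habs
      _ = k * ((1 + α) * (((α + 1) * k - 1).choose k)) := by ring
  exact (Nat.eq_of_mul_eq_mul_left (by omega) h2).symm

lemma gee_gen_eq_G (α : ℕ) (hα : 1 ≤ α) : geeSer α 1 + genSer α 1 = Gser α := by
  ext k
  rw [map_add]
  rw [geeSer, genSer, Gser, PowerSeries.coeff_mk, PowerSeries.coeff_mk, PowerSeries.coeff_mk]
  rcases Nat.eq_zero_or_pos k with rfl | hk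
  · simp
  · rw [if_neg (by omega), if_neg (by omega), if_neg (by omega)]
    rw [← Nat.cast_add]
    congr 1
    have := pascal_step α k hα hk
    rw [show α + 1 = 1 + α from by ring] at this ⊢
    convert this using 3

lemma coeff_HEstar (α k : ℕ) :
    (PowerSeries.coeff k) (HEstar α) = ((Hset α k).ncard : ℚ) := by
  have : HEstar α = gfOf (Hset α) :=
    congrArg gfOf (funext fun k => hset_eq α k)
  rw [this, gfOf, PowerSeries.coeff_mk]
  rcases Nat.eq_zero_or_pos k with rfl | hk
  · rw [if_pos rfl, hset_zero]
    simp
  · rw [if_neg (by omega)]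

lemma coeff_one_G (α : ℕ) (hα : 1 ≤ α) (j : ℕ) :
    (PowerSeries.coeff j) (1 + Gser α) = ((E'set α j).ncard : ℚ) := by
  rw [map_add, Gser, PowerSeries.coeff_mk]
  rcases Nat.eq_zero_or_pos j with rfl | hj
  · rw [if_pos rfl, PowerSeries.coeff_zero_eq_constantCoeff, map_one]
    unfold E'set
    rw [if_pos rfl, Set.ncard_singleton]
    norm_num
  · rw [if_neg (by omega), PowerSeries.coeff_one, if_neg (by omega)]
    unfold E'set
    rw [if_neg (by omega), ncard_Eset α j hα hj]
    simp

lemma coeff_Gser_pos (α : ℕ) (hα : 1 ≤ α) {k : ℕ} (hk : 1 ≤ k) :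
    (PowerSeries.coeff k) (Gser α) = ((Eset α k).ncard : ℚ) := by
  rw [Gser, PowerSeries.coeff_mk, if_neg (by omega), ncard_Eset α k hα hk]

lemma HEstar_mul (α : ℕ) (hα : 1 ≤ α) : HEstar α * (1 + Gser α) = Gser α := by
  ext k
  rw [PowerSeries.coeff_mul, Finset.Nat.sum_antidiagonal_eq_sum_range_succ_mk]
  rcases Nat.eq_zero_or_pos k with rfl | hk
  · rw [Finset.sum_range_one]
    simp only [Nat.sub_zero]
    rw [coeff_HEstar, hset_zero]
    rw [Gser, PowerSeries.coeff_mk, if_pos rfl]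
    simp
  · have hterm : ∀ i ∈ Finset.range (k + 1),
        (PowerSeries.coeff i) (HEstar α) * (PowerSeries.coeff (k - i)) (1 + Gser α)
          = (((Hset α i).ncard * (E'set α (k - i)).ncard : ℕ) : ℚ) := by
      intro i _
      rw [coeff_HEstar, coeff_one_G α hα]
      push_cast
      ring
    rw [Finset.sum_congr rfl hterm, ← Nat.cast_sum, ← card_decompE α k hk,
      coeff_Gser_pos α hα hk]

lemma Tser_eq (α : ℕ) (hα : 1 ≤ α) : Tser α = Aser α * (1 + Gser α) := by
  ext k
  rw [PowerSeries.coeff_mul, Finset.Nat.sum_antidiagonal_eq_sum_range_succ_mk]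
  have hterm : ∀ i ∈ Finset.range (k + 1),
      (PowerSeries.coeff i) (Aser α) * (PowerSeries.coeff (k - i)) (1 + Gser α)
        = (((Aset α i).ncard * (E'set α (k - i)).ncard : ℕ) : ℚ) := by
    intro i _
    rw [Aser, PowerSeries.coeff_mk, coeff_one_G α hα]
    push_cast
    ring
  rw [Finset.sum_congr rfl hterm, ← Nat.cast_sum, ← card_decompL α hα k,
    Tser, PowerSeries.coeff_mk, ncard_Lset]

lemma hCa (α : ℕ) : (α : PowerSeries ℚ) = PowerSeries.C (α : ℚ) :=
  (map_natCast (PowerSeries.C) α).symm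

lemma step3 (α : ℕ) (hα : 1 ≤ α) :
    (1 + (α : PowerSeries ℚ)) * (1 + Gser α) = 1 + (α : PowerSeries ℚ) * Tser α := by
  rw [hCa]
  ext k
  rw [add_mul, one_mul, map_add, map_add, map_add, PowerSeries.coeff_C_mul,
    PowerSeries.coeff_C_mul, map_add]
  rcases Nat.eq_zero_or_pos k with rfl | hk
  · rw [Gser, Tser, PowerSeries.coeff_mk, PowerSeries.coeff_mk, if_pos rfl]
    norm_num
  · have h1 : (PowerSeries.coeff k) (1 : PowerSeries ℚ) = 0 := by
      rw [PowerSeries.coeff_one, if_neg (by omega)]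
    rw [h1, Gser, Tser, PowerSeries.coeff_mk, PowerSeries.coeff_mk, if_neg (by omega)]
    have h2 : ((1:ℚ) + (α:ℚ)) * ((((α+1)*k-1).choose k : ℕ) : ℚ)
        = (α:ℚ) * ((((α+1)*k).choose k : ℕ) : ℚ) := by
      exact_mod_cast binom_step α k hα hk
    linear_combination h2

lemma Aser_eq_fussCatalan (α : ℕ) : Aser α = fussCatalan α := by
  ext k
  rw [Aser, fussCatalan, PowerSeries.coeff_mk, PowerSeries.coeff_mk]
  have h := card_Aset α k
  have hcast : ((α * k + 1 : ℕ) : ℚ) * ((Aset α k).ncard : ℚ)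
      = ((((α + 1) * k).choose k : ℕ) : ℚ) := by exact_mod_cast h
  have hne : ((α * k + 1 : ℕ) : ℚ) ≠ 0 := by
    push_cast
    positivity
  rw [one_div, inv_mul_eq_div, eq_div_iff hne]
  linear_combination hcast

lemma NstartNHC_eq (α : ℕ) (hα : 1 ≤ α) : NstartNHC α = Aser α - 1 := by
  ext k
  rw [map_sub, NstartNHC, gfOf, Aser, PowerSeries.coeff_mk, PowerSeries.coeff_mk]
  rcases Nat.eq_zero_or_pos k with rfl | hk
  · rw [if_pos rfl, aset_zero, Set.ncard_singleton, PowerSeries.coeff_zero_eq_constantCoeff,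
      map_one]
    norm_num
  · rw [if_neg (by omega), nset_eq α k hα hk]
    have h1 : (PowerSeries.coeff k) (1 : PowerSeries ℚ) = 0 := by
      rw [PowerSeries.coeff_one, if_neg (by omega)]
    rw [h1]
    ring

lemma HEstar_eq (α : ℕ) (hα : 1 ≤ α) :
    HEstar α = (α : PowerSeries ℚ) * (fussCatalan α - 1) := by
  have h3 := HEstar_mul α hα
  have hunit : (1 + Gser α) * (1 + (α : PowerSeries ℚ) - (α : PowerSeries ℚ) * Aser α)
      = 1 := by
    have h1 := step3 α hα
    have h2 := Tser_eq α hα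
    linear_combination h1 + (α : PowerSeries ℚ) * h2
  have : HEstar α = (α : PowerSeries ℚ) * (Aser α - 1) := by
    linear_combination (1 + (α : PowerSeries ℚ) - (α : PowerSeries ℚ) * Aser α) * h3
      + (1 - HEstar α) * hunit
  rw [this, Aser_eq_fussCatalan]


end S19

/-- For `β = 1`, `α ≥ 1`:
`H_{E✳}·(1 + g_ee + g_en) = g_ee + g_en` (i.e. `H_{E✳} = g_{E✳}/(1+g_{E✳})`),
`H_{E✳} = α·(c_α(x) − 1)`, and the generating function of paths starting with an
N-step and having no horizontal crosses equals `c_α(x) − 1`; that is, for each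
`k ≥ 1` the number of such paths is the Fuss–Catalan number `(1/(αk+1))·C((α+1)k, k)`. -/
theorem statement19 (α : ℕ) (hα : 1 ≤ α) :
    HEstar α * (1 + geeSer α 1 + genSer α 1) = geeSer α 1 + genSer α 1 ∧
    HEstar α = (α : PowerSeries ℚ) * (fussCatalan α - 1) ∧
    NstartNHC α = fussCatalan α - 1 ∧
    ∀ k : ℕ, 1 ≤ k →
      (({p | InL α 1 k p ∧ FirstStep p false ∧ NoHCross α p} :
          Set LatticePath).ncard : ℚ)
        = (1 / ((α * k + 1 : ℕ) : ℚ)) * ((((α + 1) * k).choose k : ℕ) : ℚ) := by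
  have hg : geeSer α 1 + genSer α 1 = S19.Gser α := S19.gee_gen_eq_G α hα
  refine ⟨?_, S19.HEstar_eq α hα, ?_, ?_⟩
  · have h1 : (1 : PowerSeries ℚ) + geeSer α 1 + genSer α 1 = 1 + S19.Gser α := by
      rw [add_assoc, hg]
    rw [h1, hg]
    exact S19.HEstar_mul α hα
  · rw [S19.NstartNHC_eq α hα, S19.Aser_eq_fussCatalan]
  · intro k hk
    rw [S19.nset_eq α k hα hk]
    have h := S19.card_Aset α k
    have hcast : ((α * k + 1 : ℕ) : ℚ) * ((S19.Aset α k).ncard : ℚ)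
        = ((((α + 1) * k).choose k : ℕ) : ℚ) := by exact_mod_cast h
    have hne : ((α * k + 1 : ℕ) : ℚ) ≠ 0 := by
      push_cast
      positivity
    rw [one_div, inv_mul_eq_div, eq_div_iff hne]
    linear_combination hcast
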